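/- arXiv:0906.0107 — 2 statements merged into one kernel-verified Lean document; each statement's English description precedes it below -/
import Mathlib

section
/- The function v₁(t) = ∫_ℝ dτ / √((1+τ²)(1+(t-τ)²)) is differentiable on ℝ, and its derivative satisfies v₁'(t) < 0 for every t > 0; in particular, v₁ is strictly decreasing on (0,∞). -/
open MeasureTheory Real

noncomputable def f0 (x : ℝ) : ℝ := (Real.sqrt (1 + x ^ 2))⁻¹
noncomputable def g0 (x : ℝ) : ℝ := -x / ((1 + x ^ 2) * Real.sqrt (1 + x ^ 2))

lemma one_add_sq_pos (x : ℝ) : (0:ℝ) < 1 + x ^ 2 := by positivity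

lemma sqrt_one_add_sq_pos (x : ℝ) : 0 < Real.sqrt (1 + x ^ 2) :=
  Real.sqrt_pos.2 (one_add_sq_pos x)

lemma f0_pos (x : ℝ) : 0 < f0 x := inv_pos.2 (sqrt_one_add_sq_pos x)

lemma f0_le_one (x : ℝ) : f0 x ≤ 1 := by
  rw [f0, inv_le_one_iff₀]
  right
  exact Real.one_le_sqrt.2 (by nlinarith [sq_nonneg x])

lemma f0_cont : Continuous f0 := by
  apply Continuous.inv₀
  · exact (continuous_const.add (continuous_pow 2)).sqrt
  · exact fun x => (sqrt_one_add_sq_pos x).ne'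

lemma g0_cont : Continuous g0 := by
  apply Continuous.div
  · exact continuous_neg
  · exact ((continuous_const.add (continuous_pow 2)).mul
      (continuous_const.add (continuous_pow 2)).sqrt)
  · intro x
    exact (mul_pos (one_add_sq_pos x) (sqrt_one_add_sq_pos x)).ne'

lemma hasDerivAt_f0 (x : ℝ) : HasDerivAt f0 (g0 x) x := by
  have h1 : HasDerivAt (fun y : ℝ => 1 + y ^ 2) (2 * x) x := by
    simpa using (hasDerivAt_pow 2 x).const_add 1
  have h2 := (h1.sqrt (one_add_sq_pos x).ne')
  have h3 : HasDerivAt f0 _ x := h2.inv (sqrt_one_add_sq_pos x).ne'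
  convert h3 using 1
  have hs := Real.sq_sqrt (one_add_sq_pos x).le
  rw [g0]
  field_simp
  ring_nf
  rw [hs]
  ring

lemma abs_g0_le (x : ℝ) : |g0 x| ≤ (1 + x ^ 2)⁻¹ := by
  have hx : |x| ≤ Real.sqrt (1 + x ^ 2) := by
    rw [← Real.sqrt_sq_eq_abs]
    exact Real.sqrt_le_sqrt (by nlinarith)
  rw [g0, abs_div, abs_neg]
  rw [abs_of_pos (mul_pos (one_add_sq_pos x) (sqrt_one_add_sq_pos x))]
  rw [div_le_iff₀ (mul_pos (one_add_sq_pos x) (sqrt_one_add_sq_pos x))]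
  calc |x| ≤ Real.sqrt (1 + x ^ 2) := hx
    _ ≤ (1 + x ^ 2)⁻¹ * ((1 + x ^ 2) * Real.sqrt (1 + x ^ 2)) := by
        rw [← mul_assoc, inv_mul_cancel₀ (one_add_sq_pos x).ne', one_mul]

lemma f0_lt_f0 {a b : ℝ} (h : a ^ 2 < b ^ 2) : f0 b < f0 a := by
  rw [f0, f0]
  apply inv_strictAnti₀ (sqrt_one_add_sq_pos a)
  exact Real.sqrt_lt_sqrt (one_add_sq_pos a).le (by linarith)

lemma g0_odd (x : ℝ) : g0 (-x) = -g0 x := by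
  simp [g0, neg_div]

lemma g0_neg_of_pos {x : ℝ} (hx : 0 < x) : g0 x < 0 := by
  apply div_neg_of_neg_of_pos (by linarith)
  exact mul_pos (one_add_sq_pos x) (sqrt_one_add_sq_pos x)

lemma f0_sq (x : ℝ) : f0 x ^ 2 = (1 + x ^ 2)⁻¹ := by
  rw [f0, inv_pow, Real.sq_sqrt (one_add_sq_pos x).le]

noncomputable def v1 (t : ℝ) : ℝ :=
  ∫ τ : ℝ, (Real.sqrt ((1 + τ ^ 2) * (1 + (t - τ) ^ 2)))⁻¹

lemma v1_eq (t : ℝ) : v1 t = ∫ τ : ℝ, f0 τ * f0 (t - τ) := by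
  unfold v1 f0
  congr 1
  funext τ
  rw [Real.sqrt_mul (one_add_sq_pos τ).le, mul_inv]

lemma int_inv_sub (t : ℝ) : Integrable (fun τ : ℝ => (1 + (t - τ) ^ 2)⁻¹) := by
  have h := integrable_inv_one_add_sq.comp_sub_left t
  simpa using h

lemma int_inv_add (t : ℝ) : Integrable (fun τ : ℝ => (1 + (t + τ) ^ 2)⁻¹) := by
  have h := integrable_inv_one_add_sq.comp_add_left t
  simpa using h

lemma integrable_f0_mul (t : ℝ) : Integrable (fun τ : ℝ => f0 τ * f0 (t - τ)) := by
  apply Integrable.mono ((integrable_inv_one_add_sq).add (int_inv_sub t))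
  · exact (f0_cont.mul (f0_cont.comp (continuous_const.sub continuous_id))).aestronglyMeasurable
  · filter_upwards with τ
    simp only [Pi.add_apply]
    have h1 := f0_pos τ
    have h2 := f0_pos (t - τ)
    rw [Real.norm_eq_abs, Real.norm_eq_abs, abs_of_pos (mul_pos h1 h2),
      abs_of_pos (by positivity)]
    have hs1 := f0_sq τ
    have hs2 := f0_sq (t - τ)
    nlinarith [sq_nonneg (f0 τ - f0 (t - τ))]

lemma integrable_f0_g0 (t : ℝ) : Integrable (fun τ : ℝ => f0 τ * g0 (t - τ)) := by
  apply Integrable.mono (int_inv_sub t)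
  · exact (f0_cont.mul (g0_cont.comp (continuous_const.sub continuous_id))).aestronglyMeasurable
  · filter_upwards with τ
    rw [Real.norm_eq_abs, Real.norm_eq_abs, abs_mul, abs_of_pos (f0_pos τ),
      abs_of_pos (by positivity : (0:ℝ) < (1 + (t - τ) ^ 2)⁻¹)]
    calc f0 τ * |g0 (t - τ)| ≤ 1 * |g0 (t - τ)| := by
          apply mul_le_mul_of_nonneg_right (f0_le_one τ) (abs_nonneg _)
      _ = |g0 (t - τ)| := one_mul _
      _ ≤ (1 + (t - τ) ^ 2)⁻¹ := abs_g0_le _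

lemma hasDerivAt_v1 (t₀ : ℝ) : HasDerivAt v1 (∫ τ : ℝ, f0 τ * g0 (t₀ - τ)) t₀ := by
  have hv : v1 = fun t => ∫ τ : ℝ, f0 τ * f0 (t - τ) := funext v1_eq
  rw [hv]
  have key := hasDerivAt_integral_of_dominated_loc_of_deriv_le
    (F := fun t τ => f0 τ * f0 (t - τ)) (F' := fun t τ => f0 τ * g0 (t - τ))
    (bound := fun τ => 4 * (1 + (t₀ - τ) ^ 2)⁻¹) (μ := volume) (x₀ := t₀)
    (Metric.ball_mem_nhds t₀ one_pos)
    (Filter.Eventually.of_forall fun t =>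
      (f0_cont.mul (f0_cont.comp (continuous_const.sub continuous_id))).aestronglyMeasurable)
    (integrable_f0_mul t₀)
    ((f0_cont.mul (g0_cont.comp (continuous_const.sub continuous_id))).aestronglyMeasurable)
    ?_ ((int_inv_sub t₀).const_mul 4) ?_
  · exact key.2
  · filter_upwards with τ
    intro t ht
    rw [Metric.mem_ball, Real.dist_eq] at ht
    have hd : (t₀ - t) ^ 2 ≤ 1 := by
      have := abs_le.1 ht.le
      nlinarith [this.1, this.2]
    have hle : (1 + (t₀ - τ) ^ 2) ≤ 4 * (1 + (t - τ) ^ 2) := by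
      nlinarith [sq_nonneg ((t₀ - τ) - (t - τ)), sq_nonneg (t - τ)]
    rw [Real.norm_eq_abs, abs_mul, abs_of_pos (f0_pos τ)]
    calc f0 τ * |g0 (t - τ)| ≤ 1 * |g0 (t - τ)| :=
          mul_le_mul_of_nonneg_right (f0_le_one τ) (abs_nonneg _)
      _ = |g0 (t - τ)| := one_mul _
      _ ≤ (1 + (t - τ) ^ 2)⁻¹ := abs_g0_le _
      _ ≤ 4 * (1 + (t₀ - τ) ^ 2)⁻¹ := by
          rw [show (4:ℝ) * (1 + (t₀ - τ) ^ 2)⁻¹ = ((1 + (t₀ - τ) ^ 2) / 4)⁻¹ by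
            field_simp]
          apply inv_anti₀ (by positivity)
          linarith
  · filter_upwards with τ
    intro t ht
    have h1 : HasDerivAt (fun t : ℝ => t - τ) 1 t := (hasDerivAt_id t).sub_const τ
    have h2 := (hasDerivAt_f0 (t - τ)).comp t h1
    simpa using h2.const_mul (f0 τ)
lemma integrable_sub_g0 (t : ℝ) : Integrable (fun s : ℝ => f0 (t - s) * g0 s) := by
  apply Integrable.mono integrable_inv_one_add_sq
  · exact ((f0_cont.comp (continuous_const.sub continuous_id)).mul g0_cont).aestronglyMeasurable
  · filter_upwards with s
    rw [Real.norm_eq_abs, Real.norm_eq_abs, abs_mul, abs_of_pos (f0_pos (t - s)),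
      abs_of_pos (by positivity : (0:ℝ) < (1 + s ^ 2)⁻¹)]
    calc f0 (t - s) * |g0 s| ≤ 1 * |g0 s| :=
          mul_le_mul_of_nonneg_right (f0_le_one _) (abs_nonneg _)
      _ = |g0 s| := one_mul _
      _ ≤ (1 + s ^ 2)⁻¹ := abs_g0_le _

lemma integrable_add_g0 (t : ℝ) : Integrable (fun s : ℝ => f0 (t + s) * g0 s) := by
  apply Integrable.mono integrable_inv_one_add_sq
  · exact ((f0_cont.comp (continuous_const.add continuous_id)).mul g0_cont).aestronglyMeasurable
  · filter_upwards with s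
    rw [Real.norm_eq_abs, Real.norm_eq_abs, abs_mul, abs_of_pos (f0_pos (t + s)),
      abs_of_pos (by positivity : (0:ℝ) < (1 + s ^ 2)⁻¹)]
    calc f0 (t + s) * |g0 s| ≤ 1 * |g0 s| :=
          mul_le_mul_of_nonneg_right (f0_le_one _) (abs_nonneg _)
      _ = |g0 s| := one_mul _
      _ ≤ (1 + s ^ 2)⁻¹ := abs_g0_le _

lemma D_eq1 (t : ℝ) : (∫ τ : ℝ, f0 τ * g0 (t - τ)) = ∫ s : ℝ, f0 (t - s) * g0 s := by
  have h := integral_sub_left_eq_self (fun s : ℝ => f0 (t - s) * g0 s) volume t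
  rw [← h]
  congr 1
  funext τ
  rw [sub_sub_cancel]

lemma D_eq2 (t : ℝ) : (∫ s : ℝ, f0 (t + s) * g0 s) = - ∫ s : ℝ, f0 (t - s) * g0 s := by
  have h := integral_neg_eq_self (fun s : ℝ => f0 (t - s) * g0 s) volume
  have h2 : (fun x : ℝ => f0 (t - -x) * g0 (-x)) = fun x : ℝ => -(f0 (t + x) * g0 x) := by
    funext x
    rw [g0_odd, sub_neg_eq_add, mul_neg]
  rw [← h]
  show (∫ s : ℝ, f0 (t + s) * g0 s) = - ∫ x : ℝ, f0 (t - -x) * g0 (-x)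
  rw [h2, integral_neg, neg_neg]

lemma deriv_int_neg {t : ℝ} (ht : 0 < t) : (∫ τ : ℝ, f0 τ * g0 (t - τ)) < 0 := by
  set D := ∫ τ : ℝ, f0 τ * g0 (t - τ) with hD
  set φ : ℝ → ℝ := fun s => (f0 (t - s) - f0 (t + s)) * g0 s with hφ
  have hφ_int : Integrable φ := by
    have := (integrable_sub_g0 t).sub (integrable_add_g0 t)
    apply this.congr
    filter_upwards with s
    simp only [Pi.sub_apply, hφ]
    ring
  have hφ_eq : ∫ s, φ s = 2 * D := by
    have : ∫ s, φ s = (∫ s : ℝ, f0 (t - s) * g0 s) - ∫ s : ℝ, f0 (t + s) * g0 s := by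
      rw [← integral_sub (integrable_sub_g0 t) (integrable_add_g0 t)]
      congr 1
      funext s
      rw [hφ]
      ring
    rw [this, D_eq2, hD, D_eq1]
    ring
  have hφ_nonpos : ∀ s, φ s ≤ 0 := by
    intro s
    rcases lt_trichotomy s 0 with hs | hs | hs
    · have hg : 0 < g0 s := div_pos (by linarith)
        (mul_pos (one_add_sq_pos s) (sqrt_one_add_sq_pos s))
      have hf : f0 (t - s) < f0 (t + s) := f0_lt_f0 (by nlinarith)
      simp only [hφ]
      exact mul_nonpos_of_nonpos_of_nonneg (by linarith) hg.le
    · simp [hφ, hs, g0]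
    · have hg : g0 s < 0 := g0_neg_of_pos hs
      have hf : f0 (t + s) < f0 (t - s) := f0_lt_f0 (by nlinarith)
      simp only [hφ]
      exact mul_nonpos_of_nonneg_of_nonpos (by linarith) hg.le
  have hφ_neg : ∀ s, 0 < s → φ s < 0 := by
    intro s hs
    have hg : g0 s < 0 := g0_neg_of_pos hs
    have hf : f0 (t + s) < f0 (t - s) := f0_lt_f0 (by nlinarith)
    simp only [hφ]
    exact mul_neg_of_pos_of_neg (by linarith) hg
  have hpos : 0 < ∫ s, -φ s := by
    rw [integral_pos_iff_support_of_nonneg_ae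
      (Filter.Eventually.of_forall fun s => neg_nonneg.2 (hφ_nonpos s)) hφ_int.neg]
    have hsub : Set.Ioi (0:ℝ) ⊆ Function.support fun s => -φ s := by
      intro s hs
      exact neg_ne_zero.2 (hφ_neg s hs).ne
    calc (0:ENNReal) < ⊤ := by simp
      _ = volume (Set.Ioi (0:ℝ)) := (Real.volume_Ioi).symm
      _ ≤ volume (Function.support fun s => -φ s) := measure_mono hsub
  rw [integral_neg, hφ_eq] at hpos
  linarith

theorem v1_differentiable_deriv_neg :
    Differentiable ℝ v1 ∧ (∀ t : ℝ, 0 < t → deriv v1 t < 0) ∧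
    StrictAntiOn v1 (Set.Ioi 0) := by
  have hdiff : Differentiable ℝ v1 := fun t => (hasDerivAt_v1 t).differentiableAt
  refine ⟨hdiff, fun t ht => ?_, ?_⟩
  · rw [(hasDerivAt_v1 t).deriv]
    exact deriv_int_neg ht
  · apply strictAntiOn_of_deriv_neg (convex_Ioi 0) hdiff.continuous.continuousOn
    intro x hx
    rw [interior_Ioi] at hx
    rw [(hasDerivAt_v1 x).deriv]
    exact deriv_int_neg hx
end

section
/- The function v₁(t) = ∫_ℝ dτ/√((1+τ²)(1+(t-τ)²)) satisfies lim_{t→+∞} v₁(t-r)/v₁(t) = 1 for any fixed r ≥ 0; consequently, for every r ≥ 0 there exists a constant c* > 0 such that v₁(t-α) ≤ c*·v₁(t) for all t > 0 and all α ∈ [0, r]. -/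
open MeasureTheory Filter

lemma sp (x : ℝ) : 0 < Real.sqrt (1 + x^2) := Real.sqrt_pos.2 (by positivity)
lemma key_sq (a b c : ℝ) (hc : 0 ≤ c) (h : |b| ≤ |a| + c) :
    1 + b^2 ≤ (1+a^2)*(1+c+c^2) := by
  nlinarith [sq_abs a, sq_abs b, abs_nonneg a, abs_nonneg b,
    mul_self_le_mul_self (abs_nonneg b) h,
    mul_nonneg hc (sq_nonneg (|a|-1)), mul_nonneg (mul_nonneg hc hc) (sq_nonneg a)]
lemma key_inv (a b c : ℝ) (hc : 0 ≤ c) (h : |b| ≤ |a| + c) :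
    (Real.sqrt (1+a^2))⁻¹ ≤ Real.sqrt (1+c+c^2) * (Real.sqrt (1+b^2))⁻¹ := by
  have h1 : Real.sqrt (1+b^2) ≤ Real.sqrt (1+c+c^2) * Real.sqrt (1+a^2) := by
    rw [← Real.sqrt_mul (by nlinarith : (0:ℝ) ≤ 1+c+c^2)]
    exact Real.sqrt_le_sqrt (by nlinarith [key_sq a b c hc h])
  rw [← div_eq_mul_inv, le_div_iff₀ (sp b), inv_mul_eq_div, div_le_iff₀ (sp a)]
  linarith

lemma F_eq (t τ : ℝ) : (Real.sqrt ((1 + τ ^ 2) * (1 + (t - τ) ^ 2)))⁻¹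
    = (Real.sqrt (1 + τ ^ 2))⁻¹ * (Real.sqrt (1 + (t - τ) ^ 2))⁻¹ := by
  rw [Real.sqrt_mul (by positivity), mul_inv]

lemma F_cont (t : ℝ) : Continuous fun τ : ℝ => (Real.sqrt ((1 + τ ^ 2) * (1 + (t - τ) ^ 2)))⁻¹ := by
  apply Continuous.inv₀
  · exact Real.continuous_sqrt.comp (by continuity)
  · intro x; exact ne_of_gt (Real.sqrt_pos.2 (by positivity))

lemma second_factor_le (t τ : ℝ) :
    (Real.sqrt (1 + (t - τ) ^ 2))⁻¹ ≤ Real.sqrt (1+|t|+|t|^2) * (Real.sqrt (1 + τ ^ 2))⁻¹ := by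
  apply key_inv (t - τ) τ |t| (abs_nonneg t)
  calc |τ| = |(τ - t) + t| := by ring_nf
  _ ≤ |τ - t| + |t| := abs_add_le _ _
  _ = |t - τ| + |t| := by rw [abs_sub_comm]

lemma inv_sq_eq (τ : ℝ) : (Real.sqrt (1 + τ ^ 2))⁻¹ * (Real.sqrt (1 + τ ^ 2))⁻¹ = (1 + τ^2)⁻¹ := by
  rw [← mul_inv, Real.mul_self_sqrt (by positivity)]

lemma integrable_F (t : ℝ) :
    Integrable (fun τ : ℝ => (Real.sqrt ((1 + τ ^ 2) * (1 + (t - τ) ^ 2)))⁻¹) := by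
  apply (integrable_inv_one_add_sq.const_mul (Real.sqrt (1+|t|+|t|^2))).mono'
    (F_cont t).aestronglyMeasurable
  filter_upwards with τ
  rw [Real.norm_eq_abs, abs_of_nonneg (by positivity), F_eq]
  calc (Real.sqrt (1 + τ ^ 2))⁻¹ * (Real.sqrt (1 + (t - τ) ^ 2))⁻¹
      ≤ (Real.sqrt (1 + τ ^ 2))⁻¹ * (Real.sqrt (1+|t|+|t|^2) * (Real.sqrt (1 + τ ^ 2))⁻¹) := by
        apply mul_le_mul_of_nonneg_left (second_factor_le t τ) (by positivity)
  _ = Real.sqrt (1+|t|+|t|^2) * (1 + τ^2)⁻¹ := by rw [← inv_sq_eq τ]; ring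

lemma v1_pos (t : ℝ) : 0 < v1 t := by
  rw [v1, integral_pos_iff_support_of_nonneg (fun τ => by positivity) (integrable_F t)]
  have : Function.support (fun τ : ℝ => (Real.sqrt ((1 + τ ^ 2) * (1 + (t - τ) ^ 2)))⁻¹) = Set.univ := by
    ext τ; simp only [Function.mem_support, Set.mem_univ, iff_true]
    positivity
  rw [this]
  simp

lemma comparison (r t α : ℝ) (h0 : 0 ≤ α) (h2 : α ≤ r) :
    v1 (t - α) ≤ Real.sqrt (1+r+r^2) * v1 t := by
  rw [v1, v1, ← integral_const_mul]
  apply integral_mono (integrable_F (t - α)) ((integrable_F t).const_mul _)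
  intro τ
  simp only
  have habs : |t - τ| ≤ |t - α - τ| + r := by
    rw [show t - τ = (t - α - τ) + α by ring]
    refine le_trans (abs_add_le _ _) ?_
    rw [abs_of_nonneg h0]; linarith
  have key := key_inv (t - α - τ) (t - τ) r (le_trans h0 h2) habs
  rw [F_eq, F_eq, mul_left_comm]
  exact mul_le_mul_of_nonneg_left key (by positivity)

noncomputable def W (t : ℝ) : ℝ := ∫ τ : ℝ, (Real.sqrt (1 + τ ^ 2))⁻¹ * (1 + (t - τ) ^ 2)⁻¹

lemma inv_one_add_sq_le (s : ℝ) : (1+s^2)⁻¹ ≤ (Real.sqrt (1+s^2))⁻¹ := by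
  apply inv_anti₀ (sp s)
  have h := Real.sqrt_le_sqrt (by nlinarith [sq_nonneg s, sq_nonneg (s^2)] : (1:ℝ)+s^2 ≤ (1+s^2)^2)
  rwa [Real.sqrt_sq (by positivity)] at h

lemma integrable_W (t : ℝ) :
    Integrable (fun τ : ℝ => (Real.sqrt (1 + τ ^ 2))⁻¹ * (1 + (t - τ) ^ 2)⁻¹) := by
  have hc : Continuous fun τ : ℝ => (Real.sqrt (1 + τ ^ 2))⁻¹ * (1 + (t - τ) ^ 2)⁻¹ := by
    apply Continuous.mul
    · exact Continuous.inv₀ (Real.continuous_sqrt.comp (by continuity))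
        (fun x => ne_of_gt (sp x))
    · exact Continuous.inv₀ (by continuity) (fun x => by positivity)
  apply (integrable_inv_one_add_sq.const_mul (Real.sqrt (1+|t|+|t|^2))).mono'
    hc.aestronglyMeasurable
  filter_upwards with τ
  rw [Real.norm_eq_abs, abs_of_nonneg (by positivity)]
  calc (Real.sqrt (1 + τ ^ 2))⁻¹ * (1 + (t - τ) ^ 2)⁻¹
      ≤ (Real.sqrt (1 + τ ^ 2))⁻¹ * (Real.sqrt (1 + (t - τ) ^ 2))⁻¹ :=
        mul_le_mul_of_nonneg_left (inv_one_add_sq_le _) (by positivity)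
  _ ≤ (Real.sqrt (1 + τ ^ 2))⁻¹ * (Real.sqrt (1+|t|+|t|^2) * (Real.sqrt (1 + τ ^ 2))⁻¹) :=
        mul_le_mul_of_nonneg_left (second_factor_le t τ) (by positivity)
  _ = Real.sqrt (1+|t|+|t|^2) * (1 + τ^2)⁻¹ := by rw [← inv_sq_eq τ]; ring

lemma lipschitz_sqrt (a b : ℝ) : |Real.sqrt (1+a^2) - Real.sqrt (1+b^2)| ≤ |a - b| := by
  have ha := sp a; have hb := sp b
  have ha2 := Real.sq_sqrt (by positivity : (0:ℝ) ≤ 1 + a^2)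
  have hb2 := Real.sq_sqrt (by positivity : (0:ℝ) ≤ 1 + b^2)
  have haa : |a| ≤ Real.sqrt (1+a^2) := by
    rw [← Real.sqrt_sq_eq_abs]; exact Real.sqrt_le_sqrt (by nlinarith)
  have hbb : |b| ≤ Real.sqrt (1+b^2) := by
    rw [← Real.sqrt_sq_eq_abs]; exact Real.sqrt_le_sqrt (by nlinarith)
  rw [abs_le]
  constructor <;> nlinarith [abs_nonneg (a-b), sq_abs a, sq_abs b, sq_abs (a-b),
    neg_abs_le a, le_abs_self a, neg_abs_le b, le_abs_self b, neg_abs_le (a-b), le_abs_self (a-b)]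

lemma f_diff (a b : ℝ) : |(Real.sqrt (1+a^2))⁻¹ - (Real.sqrt (1+b^2))⁻¹|
    ≤ |a-b| * ((Real.sqrt (1+a^2))⁻¹ * (Real.sqrt (1+b^2))⁻¹) := by
  have ha := sp a; have hb := sp b
  have heq : (Real.sqrt (1+a^2))⁻¹ - (Real.sqrt (1+b^2))⁻¹
      = (Real.sqrt (1+b^2) - Real.sqrt (1+a^2)) * ((Real.sqrt (1+a^2))⁻¹ * (Real.sqrt (1+b^2))⁻¹) := by
    field_simp
  rw [heq, abs_mul, abs_of_nonneg (by positivity : (0:ℝ) ≤ (Real.sqrt (1+a^2))⁻¹ * (Real.sqrt (1+b^2))⁻¹)]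
  apply mul_le_mul_of_nonneg_right _ (by positivity)
  exact le_trans (lipschitz_sqrt b a) (le_of_eq (abs_sub_comm b a))

lemma diff_bound (r t : ℝ) (hr : 0 ≤ r) :
    |v1 (t - r) - v1 t| ≤ r * Real.sqrt (1+r+r^2) * W t := by
  rw [v1, v1, ← integral_sub (integrable_F (t-r)) (integrable_F t), W, ← integral_const_mul]
  rw [← Real.norm_eq_abs]
  refine le_trans (norm_integral_le_integral_norm _)
    (integral_mono (((integrable_F (t-r)).sub (integrable_F t)).norm)
      ((integrable_W t).const_mul _) ?_)
  intro τ
  simp only [Pi.sub_apply, Real.norm_eq_abs]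
  rw [F_eq, F_eq, ← mul_sub, abs_mul, abs_of_nonneg (by positivity : (0:ℝ) ≤ (Real.sqrt (1+τ^2))⁻¹)]
  have h1 : |(Real.sqrt (1+(t - r - τ)^2))⁻¹ - (Real.sqrt (1+(t-τ)^2))⁻¹|
      ≤ r * ((Real.sqrt (1+(t-r-τ)^2))⁻¹ * (Real.sqrt (1+(t-τ)^2))⁻¹) := by
    have := f_diff (t - r - τ) (t - τ)
    rw [show t - r - τ - (t - τ) = -r by ring, abs_neg, abs_of_nonneg hr] at this
    exact this
  have h2 : (Real.sqrt (1+(t-r-τ)^2))⁻¹ ≤ Real.sqrt (1+r+r^2) * (Real.sqrt (1+(t-τ)^2))⁻¹ := by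
    apply key_inv _ _ _ hr
    rw [show t - τ = (t - r - τ) + r by ring]
    exact le_trans (abs_add_le _ _) (by rw [abs_of_nonneg hr])
  calc (Real.sqrt (1+τ^2))⁻¹ * |(Real.sqrt (1+(t - r - τ)^2))⁻¹ - (Real.sqrt (1+(t-τ)^2))⁻¹|
      ≤ (Real.sqrt (1+τ^2))⁻¹ * (r * ((Real.sqrt (1+(t-r-τ)^2))⁻¹ * (Real.sqrt (1+(t-τ)^2))⁻¹)) :=
        mul_le_mul_of_nonneg_left h1 (by positivity)
  _ ≤ (Real.sqrt (1+τ^2))⁻¹ * (r * ((Real.sqrt (1+r+r^2) * (Real.sqrt (1+(t-τ)^2))⁻¹) * (Real.sqrt (1+(t-τ)^2))⁻¹)) := by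
        apply mul_le_mul_of_nonneg_left _ (by positivity)
        apply mul_le_mul_of_nonneg_left _ hr
        exact mul_le_mul_of_nonneg_right h2 (by positivity)
  _ = r * Real.sqrt (1+r+r^2) * ((Real.sqrt (1+τ^2))⁻¹ * (1 + (t-τ)^2)⁻¹) := by
        rw [← inv_sq_eq (t-τ)]; ring

lemma inv_sqrt_le (s c : ℝ) (hc : 0 < c) (h : c ≤ |s|) : (Real.sqrt (1+s^2))⁻¹ ≤ c⁻¹ := by
  apply inv_anti₀ hc
  calc c ≤ |s| := h
  _ = Real.sqrt (s^2) := (Real.sqrt_sq_eq_abs s).symm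
  _ ≤ Real.sqrt (1+s^2) := Real.sqrt_le_sqrt (by linarith)

lemma pi_integral (t : ℝ) : ∫ τ : ℝ, (1 + (t - τ) ^ 2)⁻¹ = Real.pi := by
  rw [integral_sub_left_eq_self (fun x : ℝ => (1 + x ^ 2)⁻¹) volume t]
  exact integral_univ_inv_one_add_sq

lemma W_bound (t : ℝ) (ht : 0 < t) : W t ≤ 2*Real.pi/t + 2/t * v1 t := by
  have h2t : (0:ℝ) < t/2 := by linarith
  set A : Set ℝ := Set.Icc (t/2) (3*t/2) with hA
  have hAm : MeasurableSet A := measurableSet_Icc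
  rw [W, ← integral_add_compl hAm (integrable_W t)]
  have hint : Integrable (fun τ : ℝ => (1 + (t - τ) ^ 2)⁻¹) := by
    exact (integrable_inv_one_add_sq).comp_sub_left t
  have h1 : ∫ τ in A, (Real.sqrt (1 + τ ^ 2))⁻¹ * (1 + (t - τ) ^ 2)⁻¹ ≤ 2*Real.pi/t := by
    calc ∫ τ in A, (Real.sqrt (1 + τ ^ 2))⁻¹ * (1 + (t - τ) ^ 2)⁻¹
        ≤ ∫ τ in A, (t/2)⁻¹ * (1 + (t - τ) ^ 2)⁻¹ := by
          apply setIntegral_mono_on ((integrable_W t).integrableOn)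
            ((hint.const_mul _).integrableOn) hAm
          intro τ hτ
          apply mul_le_mul_of_nonneg_right _ (by positivity)
          exact inv_sqrt_le τ (t/2) h2t (le_trans hτ.1 (le_abs_self τ))
    _ = (t/2)⁻¹ * ∫ τ in A, (1 + (t - τ) ^ 2)⁻¹ := by rw [integral_const_mul]
    _ ≤ (t/2)⁻¹ * Real.pi := by
          apply mul_le_mul_of_nonneg_left _ (by positivity)
          rw [← pi_integral t]
          exact setIntegral_le_integral hint (Eventually.of_forall (fun τ => by positivity))
    _ = 2*Real.pi/t := by field_simp
  have h2 : ∫ τ in Aᶜ, (Real.sqrt (1 + τ ^ 2))⁻¹ * (1 + (t - τ) ^ 2)⁻¹ ≤ 2/t * v1 t := by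
    calc ∫ τ in Aᶜ, (Real.sqrt (1 + τ ^ 2))⁻¹ * (1 + (t - τ) ^ 2)⁻¹
        ≤ ∫ τ in Aᶜ, (t/2)⁻¹ * (Real.sqrt ((1 + τ ^ 2) * (1 + (t - τ) ^ 2)))⁻¹ := by
          apply setIntegral_mono_on ((integrable_W t).integrableOn)
            (((integrable_F t).const_mul _).integrableOn) hAm.compl
          intro τ hτ
          have habs : t/2 ≤ |t - τ| := by
            rw [hA, Set.mem_compl_iff, Set.mem_Icc, not_and_or, not_le, not_le] at hτ
            rcases hτ with h | h
            · rw [abs_of_pos (by linarith)]; linarith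
            · rw [abs_of_neg (by linarith)]; linarith
          have hg : (0:ℝ) ≤ (Real.sqrt (1+τ^2))⁻¹ * (Real.sqrt (1+(t-τ)^2))⁻¹ := by positivity
          calc (Real.sqrt (1 + τ ^ 2))⁻¹ * (1 + (t - τ) ^ 2)⁻¹
              = (Real.sqrt (1+(t-τ)^2))⁻¹ * ((Real.sqrt (1+τ^2))⁻¹ * (Real.sqrt (1+(t-τ)^2))⁻¹) := by
                rw [← inv_sq_eq (t-τ)]; ring
          _ ≤ (t/2)⁻¹ * ((Real.sqrt (1+τ^2))⁻¹ * (Real.sqrt (1+(t-τ)^2))⁻¹) :=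
                mul_le_mul_of_nonneg_right (inv_sqrt_le (t-τ) (t/2) h2t habs) hg
          _ = (t/2)⁻¹ * (Real.sqrt ((1 + τ ^ 2) * (1 + (t - τ) ^ 2)))⁻¹ := by rw [F_eq]
    _ = (t/2)⁻¹ * ∫ τ in Aᶜ, (Real.sqrt ((1 + τ ^ 2) * (1 + (t - τ) ^ 2)))⁻¹ := by
          rw [integral_const_mul]
    _ ≤ (t/2)⁻¹ * v1 t := by
          apply mul_le_mul_of_nonneg_left _ (by positivity)
          rw [v1]
          exact setIntegral_le_integral (integrable_F t)
            (Eventually.of_forall (fun τ => by positivity))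
    _ = 2/t * v1 t := by field_simp
  linarith

lemma v1_lower (t : ℝ) (ht : 1 ≤ t) : Real.log t / (Real.sqrt 2 * (1+t)) ≤ v1 t := by
  have ht0 : (0:ℝ) < t := by linarith
  have hs2 : (0:ℝ) < Real.sqrt 2 := Real.sqrt_pos.2 (by norm_num)
  have hIoc : IntegrableOn (fun τ : ℝ => (Real.sqrt 2 * (1+t))⁻¹ * τ⁻¹) (Set.Ioc 1 t) := by
    apply Integrable.const_mul
    have hIcc : IntegrableOn (fun τ : ℝ => τ⁻¹) (Set.Icc 1 t) := by
      apply ContinuousOn.integrableOn_compact isCompact_Icc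
      exact ContinuousOn.inv₀ continuousOn_id
        (fun x hx => ne_of_gt (lt_of_lt_of_le one_pos hx.1))
    exact hIcc.mono_set Set.Ioc_subset_Icc_self
  have key : ∫ τ in Set.Ioc 1 t, (Real.sqrt 2 * (1+t))⁻¹ * τ⁻¹ ≤ v1 t := by
    calc ∫ τ in Set.Ioc 1 t, (Real.sqrt 2 * (1+t))⁻¹ * τ⁻¹
        ≤ ∫ τ in Set.Ioc 1 t, (Real.sqrt ((1 + τ ^ 2) * (1 + (t - τ) ^ 2)))⁻¹ := by
          apply setIntegral_mono_on hIoc ((integrable_F t).integrableOn) measurableSet_Ioc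
          intro τ hτ
          obtain ⟨hτ1, hτt⟩ := hτ
          have hτ0 : (0:ℝ) < τ := lt_trans one_pos hτ1
          rw [F_eq, show (Real.sqrt 2 * (1+t))⁻¹ * τ⁻¹
            = (Real.sqrt 2 * τ)⁻¹ * (1+t)⁻¹ from by rw [mul_inv, mul_inv]; ring]
          apply mul_le_mul
          · apply inv_anti₀ (by positivity)
            calc Real.sqrt (1+τ^2) ≤ Real.sqrt (2*τ^2) := Real.sqrt_le_sqrt (by nlinarith)
            _ = Real.sqrt 2 * τ := by
                rw [Real.sqrt_mul (by norm_num), Real.sqrt_sq hτ0.le]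
          · apply inv_anti₀ (by positivity)
            calc Real.sqrt (1+(t-τ)^2) ≤ Real.sqrt ((1+t)^2) := by
                  apply Real.sqrt_le_sqrt; nlinarith
            _ = 1 + t := Real.sqrt_sq (by linarith)
          · positivity
          · positivity
    _ ≤ v1 t := by
          rw [v1]
          exact setIntegral_le_integral (integrable_F t)
            (Eventually.of_forall (fun τ => by positivity))
  have hlog : ∫ τ in Set.Ioc 1 t, (Real.sqrt 2 * (1+t))⁻¹ * τ⁻¹
      = (Real.sqrt 2 * (1+t))⁻¹ * Real.log t := by
    rw [integral_const_mul, ← intervalIntegral.integral_of_le ht,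
      integral_inv_of_pos one_pos ht0, div_one]
  rw [hlog] at key
  rw [div_eq_inv_mul]
  exact key

lemma tv1_atTop : Tendsto (fun t : ℝ => t * v1 t) atTop atTop := by
  have hs2 : (0:ℝ) < Real.sqrt 2 := Real.sqrt_pos.2 (by norm_num)
  apply tendsto_atTop_mono' atTop
    (f₁ := fun t : ℝ => Real.log t / (2 * Real.sqrt 2))
  · filter_upwards [eventually_ge_atTop (1:ℝ)] with t ht
    have hv := v1_lower t ht
    have ht0 : (0:ℝ) < t := lt_of_lt_of_le one_pos ht
    have h2 : Real.log t / (2*Real.sqrt 2) ≤ t * (Real.log t / (Real.sqrt 2 * (1+t))) := by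
      rw [mul_div_assoc', div_le_div_iff₀ (by positivity) (by positivity)]
      nlinarith [mul_nonneg (mul_nonneg hs2.le (Real.log_nonneg ht)) (sub_nonneg.2 ht)]
    calc Real.log t / (2*Real.sqrt 2) ≤ t * (Real.log t / (Real.sqrt 2 * (1+t))) := h2
    _ ≤ t * v1 t := mul_le_mul_of_nonneg_left hv ht0.le
  · exact Real.tendsto_log_atTop.atTop_div_const (by positivity)

lemma ratio_tendsto (r : ℝ) (hr : 0 ≤ r) :
    Tendsto (fun t => v1 (t - r) / v1 t) atTop (nhds 1) := by
  set K := Real.sqrt (1+r+r^2) with hK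
  have hdiff : Tendsto (fun t => v1 (t - r) / v1 t - 1) atTop (nhds 0) := by
    apply squeeze_zero_norm'
      (a := fun t : ℝ => r * K * (2*Real.pi * (t * v1 t)⁻¹ + 2 * t⁻¹))
    · filter_upwards [eventually_ge_atTop (1:ℝ)] with t ht
      have hvt := v1_pos t
      have ht0 : (0:ℝ) < t := lt_of_lt_of_le one_pos ht
      rw [Real.norm_eq_abs,
        show v1 (t - r) / v1 t - 1 = (v1 (t - r) - v1 t) / v1 t from by field_simp,
        abs_div, abs_of_pos hvt, div_le_iff₀ hvt]
      calc |v1 (t - r) - v1 t| ≤ r * K * W t := diff_bound r t hr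
      _ ≤ r * K * (2*Real.pi/t + 2/t * v1 t) := by
            apply mul_le_mul_of_nonneg_left (W_bound t ht0)
            positivity
      _ = r * K * (2*Real.pi * (t * v1 t)⁻¹ + 2 * t⁻¹) * v1 t := by
            field_simp
    · have ha : Tendsto (fun t : ℝ => (t * v1 t)⁻¹) atTop (nhds 0) :=
        tv1_atTop.inv_tendsto_atTop
      have hb : Tendsto (fun t : ℝ => t⁻¹) atTop (nhds (0:ℝ)) := tendsto_inv_atTop_zero
      have := ((ha.const_mul (2*Real.pi)).add (hb.const_mul 2)).const_mul (r * K)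
      simpa using this
  have := hdiff.add_const 1
  simp only [zero_add] at this
  convert this using 2 with t
  ring

theorem v1_ratio_limit_and_comparison :
    (∀ r : ℝ, 0 ≤ r → Tendsto (fun t => v1 (t - r) / v1 t) atTop (nhds 1)) ∧
    (∀ r : ℝ, 0 ≤ r → ∃ c : ℝ, 0 < c ∧ ∀ t : ℝ, 0 < t →
      ∀ α ∈ Set.Icc (0 : ℝ) r, v1 (t - α) ≤ c * v1 t) := by
  constructor
  · exact fun r hr => ratio_tendsto r hr
  · intro r hr
    refine ⟨Real.sqrt (1+r+r^2), Real.sqrt_pos.2 (by nlinarith), ?_⟩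
    intro t _ α hα
    exact comparison r t α hα.1 hα.2
end
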